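/- Let w be an element of minimal length in its conjugacy class in a finite Coxeter group W, J = J(w), and suppose M ≤ N_W(W_J) is a subgroup centralizing w with W_J M = N_W(W_J) and M ∩ W_J = 1. Then C_W(w) = C_{W_J}(w) ⋊ M, i.e., M is a complement of C_{W_J}(w) in C_W(w). -/

import Mathlib

open Pointwise

/-- The set `J(w)` of simple reflections occurring in a reduced expression for `w`. -/
def coxSupport {B W : Type*} [Group W] {M : CoxeterMatrix B}
    (cs : CoxeterSystem M W) (w : W) : Set B :=
  {b : B | ∃ ω : List B, cs.IsReduced ω ∧ cs.wordProd ω = w ∧ b ∈ ω}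

section CoxAuxSection

open List CoxeterSystem

namespace CoxAux


variable {B W : Type*} [Group W] [DecidableEq W] {M : CoxeterMatrix B} (cs : CoxeterSystem M W)

local prefix:100 "s" => cs.simple
local prefix:100 "π" => cs.wordProd
local prefix:100 "ℓ" => cs.length
local prefix:100 "ris" => cs.rightInvSeq

set_option linter.unusedSectionVars false

theorem ris_cons (i : B) (ω : List B) :
    ris (i :: ω) = (π ω)⁻¹ * (s i) * (π ω) :: ris ω := rfl

theorem ris_append (ω₁ ω₂ : List B) :
    ris (ω₁ ++ ω₂) = (ris ω₁).map (fun t => (π ω₂)⁻¹ * t * π ω₂) ++ ris ω₂ := by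
  induction ω₁ with
  | nil => simp
  | cons i ω ih =>
      rw [cons_append, ris_cons, ris_cons, ih, cs.wordProd_append]
      simp only [map_cons, cons_append, mul_inv_rev]
      congr 1
      group

theorem lis_eq_map_ris (ω : List B) :
    cs.leftInvSeq ω = (ris ω).map (fun t => π ω * t * (π ω)⁻¹) := by
  induction ω with
  | nil => simp
  | cons i ω ih =>
      show s i :: List.map (MulAut.conj (s i)) (cs.leftInvSeq ω) = _
      rw [ih, ris_cons]
      simp only [map_cons, map_map, cs.wordProd_cons]
      congr 1
      · simp only [mul_inv_rev, cs.inv_simple]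
        calc s i = s i * ((π ω) * (π ω)⁻¹) * ((s i * s i) * (π ω) * (π ω)⁻¹) := by
              simp [cs.simple_mul_simple_self]
        _ = s i * π ω * ((π ω)⁻¹ * s i * π ω) * ((π ω)⁻¹ * s i) := by group
        _ = _ := by group
      · apply List.map_congr_left
        intro t _
        simp only [Function.comp_apply, MulAut.conj_apply, mul_inv_rev, cs.inv_simple]
        group

theorem simple_conj_pow (i j : B) (k : ℕ) :
    s j * (s i * s j) ^ k = ((s i * s j) ^ k)⁻¹ * s j := by
  induction k with
  | zero => simp
  | succ k ih =>
      have h1 : s j * (s i * s j) = (s i * s j)⁻¹ * s j := by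
        simp only [mul_inv_rev, cs.inv_simple]
        group
      rw [pow_succ', ← mul_assoc, h1, mul_assoc, ih, ← mul_assoc, ← mul_inv_rev,
        ← pow_succ, ← pow_succ']

theorem conj_norm (i j : B) (a b : ℕ) :
    ((s i * s j) ^ a)⁻¹ * (s j * (s i * s j) ^ b) = s j * (s i * s j) ^ (a + b) := by
  rw [simple_conj_pow, simple_conj_pow, ← mul_assoc, ← mul_inv_rev, ← pow_add, Nat.add_comm b a]

theorem TT_eq (i j : B) (L : ℕ) :
    (π (alternatingWord i j L))⁻¹ * π (alternatingWord i j (L + 1)) =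
      s j * (s i * s j) ^ L := by
  rw [cs.prod_alternatingWord_eq_mul_pow, cs.prod_alternatingWord_eq_mul_pow]
  rcases Nat.even_or_odd L with he | ho
  · obtain ⟨a, rfl⟩ := he
    have h1 : ¬ Even (a + a + 1) := by simp [Nat.even_add_one, parity_simps]
    have h2 : (a + a + 1) / 2 = a := by omega
    have h3 : (a + a) / 2 = a := by omega
    rw [if_pos ⟨a, rfl⟩, if_neg h1, h2, h3, one_mul, conj_norm]
  · obtain ⟨a, rfl⟩ := ho
    have h1 : Even (2 * a + 1 + 1) := ⟨a + 1, by omega⟩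
    have h2 : ¬ Even (2 * a + 1) := by simp [Nat.even_add_one, parity_simps]
    have h3 : (2 * a + 1) / 2 = a := by omega
    have h4 : (2 * a + 1 + 1) / 2 = a + 1 := by omega
    rw [if_neg h2, if_pos h1, h3, h4, one_mul, mul_inv_rev, cs.inv_simple, mul_assoc,
      conj_norm]
    congr 2
    omega

theorem ris_alternatingWord (i j : B) (n : ℕ) :
    ris (alternatingWord i j n) =
      ((List.range n).reverse).map (fun k => s j * (s i * s j) ^ k) := by
  induction n with
  | zero => simp [alternatingWord]
  | succ n ih =>
      have hhead : (π (alternatingWord i j n))⁻¹ * s (if Even n then j else i)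
          * π (alternatingWord i j n) = s j * (s i * s j) ^ n := by
        have h := TT_eq cs i j n
        rw [alternatingWord_succ', wordProd_cons, ← mul_assoc] at h
        exact h
      rw [alternatingWord_succ', ris_cons, ih, range_succ, reverse_append, hhead]
      simp

/-- The sign-tracking involution attached to a simple reflection. -/
def sigmaFun (i : B) : W × ZMod 2 → W × ZMod 2 :=
  fun p => (s i * p.1 * s i, p.2 + if p.1 = s i then 1 else 0)

theorem sigmaFun_invol (i : B) (p : W × ZMod 2) :
    sigmaFun cs i (sigmaFun cs i p) = p := by
  obtain ⟨t, e⟩ := p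
  have h1 : s i * (s i * t * s i) * s i = t := by
    have h := cs.simple_mul_simple_self i
    calc s i * (s i * t * s i) * s i = (s i * s i) * t * (s i * s i) := by group
    _ = t := by rw [h]; group
  have h2 : (s i * t * s i = s i) ↔ (t = s i) := by
    constructor
    · intro h
      have h' : s i * (s i * t * s i) * s i = s i * s i * s i := by rw [h]
      rwa [h1, cs.simple_mul_simple_self, one_mul] at h'
    · intro h; rw [h, cs.simple_mul_simple_self, one_mul]
  simp only [sigmaFun, h1, Prod.mk.injEq]
  refine ⟨trivial, ?_⟩
  by_cases ht : t = s i
  · rw [if_pos ht]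
    show e + 1 + (if s i * t * s i = s i then 1 else 0) = e
    rw [if_pos (h2.2 ht)]
    have h3 : (1 : ZMod 2) + 1 = 0 := by decide
    rw [add_assoc, h3, add_zero]
  · rw [if_neg ht]
    show e + 0 + (if s i * t * s i = s i then 1 else 0) = e
    rw [if_neg (fun hh => ht (h2.1 hh)), add_zero, add_zero]

def sigmaPerm (i : B) : Equiv.Perm (W × ZMod 2) :=
  ⟨sigmaFun cs i, sigmaFun cs i, sigmaFun_invol cs i, sigmaFun_invol cs i⟩

theorem sigmaPerm_apply (i : B) (p : W × ZMod 2) : sigmaPerm cs i p = sigmaFun cs i p := rfl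

theorem sigma_prod_apply (ω : List B) (t : W) (e : ZMod 2) :
    (ω.map (sigmaPerm cs)).prod (t, e) =
      (π ω * t * (π ω)⁻¹, e + ((ris ω).count t : ZMod 2)) := by
  induction ω with
  | nil => simp
  | cons i ω ih =>
      rw [map_cons, prod_cons, Equiv.Perm.mul_apply, ih, sigmaPerm_apply]
      have hcond : (π ω * t * (π ω)⁻¹ = s i) ↔ (t = (π ω)⁻¹ * s i * π ω) := by
        constructor
        · intro h; rw [← h]; group
        · intro h; rw [h]; group
      simp only [sigmaFun, cs.wordProd_cons, ris_cons, count_cons, beq_iff_eq, Prod.mk.injEq]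
      refine ⟨by simp only [mul_inv_rev, cs.inv_simple]; group, ?_⟩
      rcases eq_or_ne t ((π ω)⁻¹ * s i * π ω) with h | h
      · rw [if_pos (hcond.2 h), if_pos h.symm]
        push_cast
        ring
      · rw [if_neg (fun hh => h (hcond.1 hh)), if_neg (fun hh => h hh.symm)]
        push_cast
        ring

theorem sigma_liftable : M.IsLiftable (sigmaPerm cs) := by
  intro i j
  have hword : ∀ m : ℕ, (sigmaPerm cs i * sigmaPerm cs j) ^ m =
      ((alternatingWord i j (2 * m)).map (sigmaPerm cs)).prod := by
    intro m
    induction m with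
    | zero => simp [alternatingWord]
    | succ m ih =>
        have h2 : 2 * (m + 1) = (2 * m + 1) + 1 := by ring
        rw [h2, alternatingWord_succ', alternatingWord_succ']
        have he1 : ¬ Even (2 * m + 1) := by simp [Nat.even_add_one, parity_simps]
        have he2 : Even (2 * m) := ⟨m, by ring⟩
        rw [if_neg he1, if_pos he2, map_cons, map_cons, prod_cons, prod_cons, ← ih,
          pow_succ', mul_assoc]
  apply Equiv.ext
  rintro ⟨t, e⟩
  rw [hword (M i j), sigma_prod_apply]
  have hprod : π (alternatingWord i j (2 * M i j)) = 1 := by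
    rw [cs.prod_alternatingWord_eq_mul_pow]
    have h4 : Even (2 * M i j) := ⟨M i j, by ring⟩
    rw [if_pos h4, one_mul]
    have h5 : 2 * M i j / 2 = M i j := by omega
    rw [h5, cs.simple_mul_simple_pow]
  have hcount : ∃ c, (ris (alternatingWord i j (2 * M i j))).count t = 2 * c := by
    rw [ris_alternatingWord cs i j, map_reverse, count_reverse, two_mul, range_add,
      map_append, count_append, map_map]
    have h6 : ((range (M i j)).map ((fun k => s j * (s i * s j) ^ k) ∘ (M i j + ·))) =
        ((range (M i j)).map (fun k => s j * (s i * s j) ^ k)) := by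
      apply map_congr_left
      intro k _
      simp only [Function.comp_apply]
      rw [pow_add, cs.simple_mul_simple_pow, one_mul]
    rw [h6]
    exact ⟨_, (two_mul _).symm⟩
  obtain ⟨c, hc⟩ := hcount
  rw [hprod, hc]
  have h7 : ((2 * c : ℕ) : ZMod 2) = 0 := by
    push_cast
    have h8 : (2 : ZMod 2) = 0 := rfl
    rw [h8, zero_mul]
  simp only [Equiv.Perm.one_apply, one_mul, inv_one, mul_one, h7, add_zero]

theorem conj_injective (z : W) : Function.Injective (fun x : W => z⁻¹ * x * z) := by
  intro x y h
  simpa using mul_left_cancel (mul_right_cancel h)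

theorem conj_injective' (z : W) : Function.Injective (fun x : W => z * x * z⁻¹) := by
  intro x y h
  simpa using mul_left_cancel (mul_right_cancel h)

/-- Parity of occurrences in the right inversion sequence only depends on the element. -/
theorem count_ris_parity {ω ω' : List B} (h : π ω = π ω') (t : W) :
    (ris ω).count t % 2 = (ris ω').count t % 2 := by
  set φ : W →* Equiv.Perm (W × ZMod 2) := cs.lift ⟨sigmaPerm cs, sigma_liftable cs⟩ with hφ
  have key : ∀ α : List B, φ (π α) = (α.map (sigmaPerm cs)).prod := by
    intro α
    induction α with
    | nil => simp
    | cons i α ih =>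
        rw [cs.wordProd_cons, map_mul, ih, map_cons, prod_cons, cs.lift_apply_simple]
  have h1 := congrArg (fun f : Equiv.Perm (W × ZMod 2) => (f (t, 0)).2)
    ((key ω).symm.trans (by rw [h, key ω']))
  simp only [sigma_prod_apply, zero_add] at h1
  rwa [ZMod.natCast_eq_natCast_iff, Nat.ModEq] at h1

theorem simple_conj_helper (p : W) (k : B) :
    (s k * p⁻¹)⁻¹ * s k * (s k * p⁻¹) = p * s k * p⁻¹ := by
  simp only [mul_inv_rev, inv_inv, cs.inv_simple]
  rw [mul_assoc (p * s k), ← mul_assoc (s k) (s k), cs.simple_mul_simple_self, one_mul]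

/-- The palindromic word of a reflection contains it an odd number of times in its
right inversion sequence. -/
theorem count_palindrome_odd (a : List B) (k : B) :
    Odd ((ris (a ++ k :: a.reverse)).count (π a * s k * (π a)⁻¹)) := by
  have hz : π (k :: a.reverse) = s k * (π a)⁻¹ := by
    rw [cs.wordProd_cons, cs.wordProd_reverse]
  have hhead : (π a.reverse)⁻¹ * s k * (π a.reverse) = π a * s k * (π a)⁻¹ := by
    rw [cs.wordProd_reverse, inv_inv]
  rw [ris_append, ris_cons, hhead, hz, count_append, count_cons]
  have claim1 : ((ris a).map (fun x => (s k * (π a)⁻¹)⁻¹ * x * (s k * (π a)⁻¹))).count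
      (π a * s k * (π a)⁻¹) = (ris a).count (s k) := by
    have h0 := count_map_of_injective (ris a) _ (conj_injective (s k * (π a)⁻¹)) (s k)
    rw [simple_conj_helper] at h0
    exact h0
  have claim2 : (ris a.reverse).count (π a * s k * (π a)⁻¹) = (ris a).count (s k) := by
    rw [cs.rightInvSeq_reverse, count_reverse, lis_eq_map_ris]
    exact count_map_of_injective (ris a) _ (conj_injective' (π a)) (s k)
  rw [claim1, claim2]
  simp only [beq_self_eq_true, if_true]
  exact ⟨(ris a).count (s k), by ring⟩

/-- Characterization of right inversions by parity of occurrences in any word. -/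
theorem isRightInversion_iff_odd_count {w t : W} {ω : List B} (hω : π ω = w) :
    cs.IsRightInversion w t ↔ Odd ((ris ω).count t) := by
  obtain ⟨ω₀, hlen₀, hw₀⟩ := cs.exists_reduced_word w
  have hred₀ : cs.IsReduced ω₀ := hlen₀
  have hpar := count_ris_parity cs (ω := ω) (ω' := ω₀) (by rw [hω]; exact hw₀) t
  constructor
  · intro h
    obtain ⟨q, k, hqk⟩ := h.1
    obtain ⟨a, rfl⟩ := cs.wordProd_surjective q
    have htt : t * t = 1 := h.1.mul_self
    obtain ⟨ω₁, hlen₁, hw₁⟩ := cs.exists_reduced_word (w * t)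
    have hred₁ : cs.IsReduced ω₁ := hlen₁
    have hτ : π (a ++ k :: a.reverse) = t := by
      rw [cs.wordProd_append, cs.wordProd_cons, cs.wordProd_reverse, hqk, ← mul_assoc]
    have hprod : π (ω₁ ++ (a ++ k :: a.reverse)) = π ω := by
      rw [cs.wordProd_append, hτ, ← hw₁, mul_assoc, htt, mul_one, hω]
    have hnotmem : t ∉ ris ω₁ := by
      intro hmem
      have h2 := (cs.isRightInversion_of_mem_rightInvSeq hred₁ hmem).2
      rw [← hw₁, mul_assoc, htt, mul_one] at h2
      have h3 := h.2
      omega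
    have hcnt : Odd ((ris (ω₁ ++ (a ++ k :: a.reverse))).count t) := by
      rw [ris_append, count_append, hτ]
      have h0 := count_map_of_injective (ris ω₁) _ (conj_injective t) t
      have hft : t⁻¹ * t * t = t := by group
      rw [hft] at h0
      rw [h0, count_eq_zero.2 hnotmem, zero_add, hqk]
      exact count_palindrome_odd cs a k
    have hpar2 := count_ris_parity cs hprod t
    rw [Nat.odd_iff, ← hpar2, ← Nat.odd_iff]
    exact hcnt
  · intro h
    rw [Nat.odd_iff, hpar, ← Nat.odd_iff] at h
    have hmem : t ∈ ris ω₀ := count_pos_iff.1 (Nat.pos_of_ne_zero (by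
      intro h0; rw [h0] at h; exact (Nat.not_odd_iff_even.2 Even.zero) h))
    have h1 := cs.isRightInversion_of_mem_rightInvSeq hred₀ hmem
    rwa [← hw₀] at h1


/-- The set of right inversions. -/
def NRset (w : W) : Set W := {t | cs.IsRightInversion w t}

theorem mem_NRset {w t : W} : t ∈ NRset cs w ↔ cs.IsRightInversion w t := Iff.rfl

theorem ncard_NRset (w : W) : (NRset cs w).ncard = ℓ w := by
  obtain ⟨ω, hlen, hw⟩ := cs.exists_reduced_word w
  have hred : cs.IsReduced ω := hlen
  have hset : NRset cs w = ↑(ris ω).toFinset := by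
    ext t
    rw [mem_NRset, coe_toFinset, Set.mem_setOf_eq]
    constructor
    · intro h
      have hodd := (isRightInversion_iff_odd_count cs hw.symm).1 h
      exact count_pos_iff.1 (Nat.pos_of_ne_zero (by
        intro h0; rw [h0] at hodd; exact (Nat.not_odd_iff_even.2 Even.zero) hodd))
    · intro h
      have h1 := cs.isRightInversion_of_mem_rightInvSeq hred h
      rwa [← hw] at h1
  rw [hset, Set.ncard_coe_finset, List.toFinset_card_of_nodup hred.nodup_rightInvSeq,
    cs.length_rightInvSeq, hw]
  exact (hred : _ = _).symm

theorem isRightInversion_mul_iff (x y t : W) :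
    cs.IsRightInversion (x * y) t ↔
      (cs.IsRightInversion y t ↔ ¬ cs.IsRightInversion x (y * t * y⁻¹)) := by
  obtain ⟨α, hα⟩ := cs.wordProd_surjective x
  obtain ⟨β, hβ⟩ := cs.wordProd_surjective y
  have hαβ : π (α ++ β) = x * y := by rw [cs.wordProd_append, hα, hβ]
  rw [isRightInversion_iff_odd_count cs hαβ, isRightInversion_iff_odd_count cs hβ,
    isRightInversion_iff_odd_count cs hα, ris_append, count_append]
  have hconj : (π β)⁻¹ * (y * t * y⁻¹) * π β = t := by
    rw [hβ]; group
  have h0 := count_map_of_injective (ris α) _ (conj_injective (π β)) (y * t * y⁻¹)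
  rw [hconj] at h0
  rw [h0, Nat.odd_add]
  have e1 := Nat.not_odd_iff_even (n := count (y * t * y⁻¹) (cs.rightInvSeq α))
  have e2 := Nat.not_odd_iff_even (n := count t (cs.rightInvSeq β))
  tauto

theorem wordProd_mem_closure {S : Set B} {ω : List B} (h : ∀ b ∈ ω, b ∈ S) :
    π ω ∈ Subgroup.closure (cs.simple '' S) := by
  induction ω with
  | nil => rw [cs.wordProd_nil]; exact Subgroup.one_mem _
  | cons i ω ih =>
      rw [cs.wordProd_cons]
      exact mul_mem (Subgroup.subset_closure ⟨i, h i (mem_cons_self), rfl⟩)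
        (ih fun b hb => h b (mem_cons_of_mem _ hb))

theorem wordProd_mem_of_simples {ω : List B} {H : Subgroup W} (h : ∀ b ∈ ω, s b ∈ H) :
    π ω ∈ H := by
  induction ω with
  | nil => rw [cs.wordProd_nil]; exact H.one_mem
  | cons i ω ih =>
      rw [cs.wordProd_cons]
      exact mul_mem (h i (mem_cons_self)) (ih fun b hb => h b (mem_cons_of_mem _ hb))

theorem exists_word_of_mem_closure {S : Set B} {v : W}
    (h : v ∈ Subgroup.closure (cs.simple '' S)) :
    ∃ ω : List B, (∀ b ∈ ω, b ∈ S) ∧ π ω = v := by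
  induction h using Subgroup.closure_induction with
  | mem z hz =>
      obtain ⟨b, hb, rfl⟩ := hz
      exact ⟨[b], by simpa using hb, cs.wordProd_singleton b⟩
  | one => exact ⟨[], by simp, cs.wordProd_nil⟩
  | mul z₁ z₂ _ _ ih₁ ih₂ =>
      obtain ⟨ω₁, hS₁, hπ₁⟩ := ih₁
      obtain ⟨ω₂, hS₂, hπ₂⟩ := ih₂
      exact ⟨ω₁ ++ ω₂, by
        intro b hb
        rcases mem_append.1 hb with h' | h'
        · exact hS₁ b h'
        · exact hS₂ b h', by rw [cs.wordProd_append, hπ₁, hπ₂]⟩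
  | inv z _ ih =>
      obtain ⟨ω, hS, hπ⟩ := ih
      exact ⟨ω.reverse, fun b hb => hS b (mem_reverse.1 hb), by rw [cs.wordProd_reverse, hπ]⟩

theorem ris_mem_closure {S : Set B} {ω : List B} (h : ∀ b ∈ ω, b ∈ S) {t : W}
    (ht : t ∈ ris ω) : t ∈ Subgroup.closure (cs.simple '' S) := by
  induction ω with
  | nil => simp [CoxeterSystem.rightInvSeq] at ht
  | cons i ω ih =>
      rw [ris_cons] at ht
      have htail : ∀ b ∈ ω, b ∈ S := fun b hb => h b (mem_cons_of_mem _ hb)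
      rcases mem_cons.1 ht with rfl | hmem
      · exact mul_mem (mul_mem (inv_mem (wordProd_mem_closure cs htail))
          (Subgroup.subset_closure ⟨i, h i (mem_cons_self), rfl⟩))
          (wordProd_mem_closure cs htail)
      · exact ih htail hmem

theorem simple_mem_of_ris_mem {ω : List B} {H : Subgroup W}
    (h : ∀ t ∈ ris ω, t ∈ H) : ∀ b ∈ ω, s b ∈ H := by
  induction ω with
  | nil => simp
  | cons i ω ih =>
      have htail : ∀ t ∈ ris ω, t ∈ H := fun t ht => h t (by
        rw [ris_cons]; exact mem_cons_of_mem _ ht)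
      have hsimp := ih htail
      have hπ : π ω ∈ H := wordProd_mem_of_simples cs hsimp
      have h0 : (π ω)⁻¹ * s i * π ω ∈ H := h _ (by rw [ris_cons]; exact mem_cons_self)
      intro b hb
      rcases mem_cons.1 hb with rfl | hmem
      · have hexp : s b = π ω * ((π ω)⁻¹ * s b * π ω) * (π ω)⁻¹ := by group
        rw [hexp]
        exact mul_mem (mul_mem hπ h0) (inv_mem hπ)
      · exact hsimp b hmem

/-- Key theorem: any element centralizing an element of minimal length in its conjugacy
class normalizes the standard parabolic subgroup generated by its support. -/
theorem centralizer_le_support_normalizer [Finite W] {w : W}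
    (hmin : ∀ v : W, ℓ w ≤ ℓ (v⁻¹ * w * v)) {x : W} (hx : x * w = w * x) :
    x ∈ Subgroup.normalizer ((Subgroup.closure (cs.simple '' coxSupport cs w) : Subgroup W) : Set W) := by
  set WJ := Subgroup.closure (cs.simple '' coxSupport cs w) with hWJdef
  obtain ⟨ωw, hlw, hww⟩ := cs.exists_reduced_word w
  have hredw : cs.IsReduced ωw := hlw
  have hwmem : w ∈ WJ := by
    rw [hww]
    exact wordProd_mem_closure cs (fun b hb => ⟨ωw, hredw, hww.symm, hb⟩)
  -- minimal length element of the coset x • WJ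
  obtain ⟨g, hgmem, hgmin⟩ := Set.exists_min_image ((fun q => x * q) '' (WJ : Set W))
    (fun z => ℓ z) (Set.toFinite _) ⟨x, 1, WJ.one_mem, mul_one x⟩
  obtain ⟨p, hp, hgp0⟩ := hgmem
  have hgp : x * p = g := hgp0
  have hxwx : x⁻¹ * w * x = w := by
    calc x⁻¹ * w * x = x⁻¹ * (w * x) := by group
    _ = x⁻¹ * (x * w) := by rw [← hx]
    _ = w := by group
  set u := g⁻¹ * w * g with hu
  have hu_def : u = p⁻¹ * w * p := by
    rw [hu, ← hgp]
    calc (x * p)⁻¹ * w * (x * p) = p⁻¹ * (x⁻¹ * w * x) * p := by group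
    _ = p⁻¹ * w * p := by rw [hxwx]
  have humem : u ∈ WJ := by
    rw [hu_def]
    exact mul_mem (mul_mem (inv_mem hp) hwmem) hp
  have hlu_ge : ℓ w ≤ ℓ u := by rw [hu_def]; exact hmin p
  have hgu : g * u = w * g := by rw [hu]; group
  have hF1 : ∀ t, cs.IsRightInversion g t → t ∉ WJ := by
    intro t ht htJ
    have hlt : ℓ (g * t) < ℓ g := ht.2
    have hmem' : g * t ∈ (fun q => x * q) '' (WJ : Set W) :=
      ⟨p * t, mul_mem hp htJ, by show x * (p * t) = g * t; rw [← mul_assoc, hgp]⟩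
    have := hgmin _ hmem'
    omega
  have hF2 : ∀ v, v ∈ WJ → ∀ t, cs.IsRightInversion v t → t ∈ WJ := by
    intro v hv t ht
    obtain ⟨ωv, hωS, hωv⟩ := exists_word_of_mem_closure cs hv
    have hodd := (isRightInversion_iff_odd_count cs hωv).1 ht
    have hmem' : t ∈ ris ωv := count_pos_iff.1 (Nat.pos_of_ne_zero (by
      intro h0; rw [h0] at hodd; exact (Nat.not_odd_iff_even.2 Even.zero) hodd))
    exact ris_mem_closure cs hωS hmem'
  -- decomposition of the inversion set of g * u
  have hdecomp : NRset cs (g * u) = NRset cs u ∪ (fun t => u⁻¹ * t * u) '' NRset cs g := by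
    ext t
    rw [Set.mem_union, mem_NRset, mem_NRset, isRightInversion_mul_iff cs g u t]
    constructor
    · intro hiff
      by_cases htJ : t ∈ WJ
      · left
        apply hiff.2
        intro hc
        exact hF1 _ hc (mul_mem (mul_mem humem htJ) (inv_mem humem))
      · right
        have hnu : ¬ cs.IsRightInversion u t := fun hc => htJ (hF2 u humem t hc)
        have hg' : cs.IsRightInversion g (u * t * u⁻¹) := by
          by_contra hc
          exact hnu (hiff.2 hc)
        exact ⟨u * t * u⁻¹, hg', by group⟩
    · rintro (ht | ⟨r, hr, rfl⟩)
      · have htJ : t ∈ WJ := hF2 u humem t ht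
        have hng : ¬ cs.IsRightInversion g (u * t * u⁻¹) :=
          fun hc => hF1 _ hc (mul_mem (mul_mem humem htJ) (inv_mem humem))
        exact iff_of_true ht hng
      · rw [mem_NRset] at hr
        have hrJ : r ∉ WJ := hF1 r hr
        have hnu : ¬ cs.IsRightInversion u (u⁻¹ * r * u) := by
          intro hc
          have := hF2 u humem _ hc
          exact hrJ (by
            have hr' : r = u * (u⁻¹ * r * u) * u⁻¹ := by group
            rw [hr']
            exact mul_mem (mul_mem humem this) (inv_mem humem))
        have hcon : u * (u⁻¹ * r * u) * u⁻¹ = r := by group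
        constructor
        · intro hc; exact absurd hc hnu
        · intro hc
          rw [hcon] at hc
          exact absurd hr hc
  have hdisj : Disjoint (NRset cs u) ((fun t => u⁻¹ * t * u) '' NRset cs g) := by
    rw [Set.disjoint_left]
    rintro t ht ⟨r, hr, rfl⟩
    rw [mem_NRset] at ht hr
    have htJ := hF2 u humem _ ht
    apply hF1 r hr
    have hr' : r = u * (u⁻¹ * r * u) * u⁻¹ := by group
    rw [hr']
    exact mul_mem (mul_mem humem htJ) (inv_mem humem)
  have hlgu : ℓ (g * u) = ℓ u + ℓ g := by
    rw [← ncard_NRset cs (g * u), hdecomp,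
      Set.ncard_union_eq hdisj (Set.toFinite _) (Set.toFinite _), ncard_NRset,
      Set.ncard_image_of_injective _ (conj_injective u), ncard_NRset]
  have hlu : ℓ u = ℓ w := by
    have h1 := cs.length_mul_le w g
    rw [← hgu, hlgu] at h1
    omega
  -- inversion set of u is the conjugate of that of w
  have hCB : NRset cs u ⊆ (fun t => g⁻¹ * t * g) '' NRset cs w := by
    intro t ht
    have htJ : t ∈ WJ := hF2 u humem t ht
    have h1 : t ∈ NRset cs (g * u) := by rw [hdecomp]; exact Or.inl ht
    have hwg : cs.IsRightInversion (w * g) t := by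
      rw [mem_NRset] at h1; rwa [hgu] at h1
    have hiff := (isRightInversion_mul_iff cs w g t).1 hwg
    have hng : ¬ cs.IsRightInversion g t := fun hc => hF1 t hc htJ
    have hw' : cs.IsRightInversion w (g * t * g⁻¹) := by
      by_contra hc
      exact hng (hiff.2 hc)
    exact ⟨g * t * g⁻¹, hw', by group⟩
  have hcards : ((fun t => g⁻¹ * t * g) '' NRset cs w).ncard ≤ (NRset cs u).ncard := by
    rw [Set.ncard_image_of_injective _ (conj_injective g), ncard_NRset, ncard_NRset, hlu]
  have hCeqB := Set.eq_of_subset_of_ncard_le hCB hcards (Set.toFinite _)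
  have hNRw : ∀ r, cs.IsRightInversion w r → g⁻¹ * r * g ∈ WJ := by
    intro r hr
    have h1 : g⁻¹ * r * g ∈ NRset cs u := by rw [hCeqB]; exact ⟨r, hr, rfl⟩
    exact hF2 u humem _ h1
  -- WJ is contained in its conjugate by g
  set K : Subgroup W := Subgroup.map (MulAut.conj g).toMonoidHom WJ with hK
  have hmemK : ∀ z : W, z ∈ K ↔ g⁻¹ * z * g ∈ WJ := by
    intro z
    rw [hK, Subgroup.mem_map]
    constructor
    · rintro ⟨y, hy, rfl⟩
      have hy' : g⁻¹ * ((MulAut.conj g).toMonoidHom y) * g = y := by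
        simp only [MulEquiv.coe_toMonoidHom, MulAut.conj_apply]
        group
      rwa [hy']
    · intro h
      exact ⟨g⁻¹ * z * g, h, by
        simp only [MulEquiv.coe_toMonoidHom, MulAut.conj_apply]
        group⟩
  have hWJK : WJ ≤ K := by
    rw [hWJdef]
    apply (Subgroup.closure_le K).2
    rintro _ ⟨b, hb, rfl⟩
    obtain ⟨ωb, hredb, hπb, hbmem⟩ := hb
    have hrisK : ∀ t ∈ ris ωb, t ∈ K := by
      intro t ht
      have hIRI := cs.isRightInversion_of_mem_rightInvSeq hredb ht
      rw [hπb] at hIRI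
      exact (hmemK t).2 (hNRw t hIRI)
    exact simple_mem_of_ris_mem cs hrisK b hbmem
  have hKcoe : (K : Set W) = (fun y => g * y * g⁻¹) '' (WJ : Set W) := by
    rw [hK, Subgroup.coe_map]
    congr 1
  have hcard2 : (K : Set W).ncard ≤ (WJ : Set W).ncard := by
    rw [hKcoe, Set.ncard_image_of_injective _ (conj_injective' g)]
  have hKWJ : ((WJ : Set W) : Set W) = (K : Set W) :=
    Set.eq_of_subset_of_ncard_le hWJK hcard2 (Set.toFinite _)
  have hgN : g ∈ Subgroup.normalizer (WJ : Set W) := by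
    rw [Subgroup.mem_normalizer_iff]
    intro h
    constructor
    · intro hh
      have h1 : g * h * g⁻¹ ∈ K := by
        rw [hK, Subgroup.mem_map]
        exact ⟨h, hh, by simp only [MulEquiv.coe_toMonoidHom, MulAut.conj_apply]⟩
      rw [← SetLike.mem_coe, ← hKWJ] at h1
      exact h1
    · intro hh
      have h1 : g * h * g⁻¹ ∈ K := by rw [← SetLike.mem_coe, ← hKWJ]; exact hh
      have h2 := (hmemK _).1 h1
      have h3 : g⁻¹ * (g * h * g⁻¹) * g = h := by group
      rwa [h3] at h2
  have hxg : x = g * p⁻¹ := by rw [← hgp]; group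
  rw [hxg]
  exact mul_mem hgN (inv_mem (Subgroup.le_normalizer hp))


end CoxAux

end CoxAuxSection

/-- Let `w` be of minimal length in its conjugacy class, `J = J(w)`, and let
`M ≤ N_W(W_J)` centralize `w` with `W_J M = N_W(W_J)` and `M ⊓ W_J = ⊥`.
Then `C_W(w) = C_{W_J}(w) ⋊ M`. -/
theorem stmt_19 {B W : Type*} [Group W] [Finite W] {M : CoxeterMatrix B}
    (cs : CoxeterSystem M W) (w : W)
    (hmin : ∀ v : W, cs.length w ≤ cs.length (v⁻¹ * w * v))
    (WJ : Subgroup W) (hWJ : WJ = Subgroup.closure (cs.simple '' coxSupport cs w))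
    (Cmpl : Subgroup W)
    (hM1 : Cmpl ≤ Subgroup.normalizer (WJ : Set W))
    (hM2 : ∀ x ∈ Cmpl, x * w = w * x)
    (hM3 : (WJ : Set W) * (Cmpl : Set W) = (Subgroup.normalizer (WJ : Set W) : Set W))
    (hM4 : WJ ⊓ Cmpl = ⊥) :
    ((Subgroup.centralizer {w} ⊓ WJ : Subgroup W) : Set W) * (Cmpl : Set W) =
        (Subgroup.centralizer {w} : Set W) ∧
      (Subgroup.centralizer {w} ⊓ WJ) ⊓ Cmpl = ⊥ := by
  classical
  have hCmem : ∀ c : W, c ∈ Subgroup.centralizer {w} ↔ c * w = w * c := by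
    intro c
    rw [Subgroup.mem_centralizer_iff]
    constructor
    · intro h; exact (h w rfl).symm
    · intro h g hg
      rw [Set.mem_singleton_iff] at hg
      rw [hg, h]
  constructor
  · ext z
    constructor
    · rintro ⟨a, ha, m, hm, rfl⟩
      rw [SetLike.mem_coe] at ha hm ⊢
      have haC : a ∈ Subgroup.centralizer {w} := (Subgroup.mem_inf.1 ha).1
      have hmC : m ∈ Subgroup.centralizer {w} := (hCmem m).2 (hM2 m hm)
      exact mul_mem haC hmC
    · intro hz
      rw [SetLike.mem_coe] at hz
      have hzc : z * w = w * z := (hCmem z).1 hz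
      have hzN : z ∈ Subgroup.normalizer (WJ : Set W) := by
        rw [hWJ]
        exact CoxAux.centralizer_le_support_normalizer cs hmin hzc
      have hzmul : z ∈ (WJ : Set W) * (Cmpl : Set W) := by
        rw [hM3]
        exact hzN
      obtain ⟨a, haWJ, m, hm, hamz⟩ := hzmul
      rw [SetLike.mem_coe] at haWJ hm
      have hmC : m ∈ Subgroup.centralizer {w} := (hCmem m).2 (hM2 m hm)
      have haC : a ∈ Subgroup.centralizer {w} := by
        have ha' : a = z * m⁻¹ := by rw [← hamz]; group
        rw [ha']
        exact mul_mem hz (inv_mem hmC)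
      exact ⟨a, SetLike.mem_coe.2 (Subgroup.mem_inf.2 ⟨haC, haWJ⟩), m,
        SetLike.mem_coe.2 hm, hamz⟩
  · apply le_antisymm _ bot_le
    calc (Subgroup.centralizer {w} ⊓ WJ) ⊓ Cmpl ≤ WJ ⊓ Cmpl :=
          inf_le_inf_right _ inf_le_right
    _ = ⊥ := hM4
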